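/- Let a node a and finitely many nodes b ∈ B have mutually independent random positions in the Euclidean plane. The position X_a of node a has law Σ_j P_j(a)·U(S_j(a)), a finite mixture of uniform distributions on axis-aligned squares S_j(a) of side C_j(a) > 0 with nonnegative weights P_j(a) summing to 1; similarly each X_b has law Σ_k P_k(b)·U(S_k(b)) over squares S_k(b) of side C_k(b) > 0. Let K > 0 and assume that for every pair of squares (S_j(a), S_k(b)) the separation hypothesis holds: for every y ∈ S_k(b), if y ∈ S_j(a) then the closed Euclidean ball of radius K centered at y is contained in S_j(a), and if y ∉ S_j(a) then that ball is disjoint from S_j(a). Then the expected number of nodes b ∈ B with dist(X_a, X_b) ≤ K equals Σ_{b∈B} Σ_j Σ_k P_j(a)·P_k(b)·π·K²·vol(S_j(a) ∩ S_k(b)) / (C_j(a)²·C_k(b)²). -/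

import Mathlib

open MeasureTheory ProbabilityTheory Real Set

/-- An axis-aligned square `[x₀, x₀+C] × [y₀, y₀+C]` in the Euclidean plane. -/
def axisSquare (x₀ y₀ C : ℝ) : Set (EuclideanSpace ℝ (Fin 2)) :=
  {p | p 0 ∈ Set.Icc x₀ (x₀ + C) ∧ p 1 ∈ Set.Icc y₀ (y₀ + C)}

open scoped ENNReal

lemma measurableSet_axisSquare (x y C : ℝ) : MeasurableSet (axisSquare x y C) := by
  unfold axisSquare
  exact (measurableSet_Icc.preimage (by fun_prop)).inter
    (measurableSet_Icc.preimage (by fun_prop))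

lemma volume_axisSquare (x y C : ℝ) :
    volume (axisSquare x y C) = ENNReal.ofReal C ^ 2 := by
  have he : axisSquare x y C = (MeasurableEquiv.toLp 2 (Fin 2 → ℝ)).symm ⁻¹'
      (Set.univ.pi fun i => Set.Icc (if i = 0 then x else y) ((if i = 0 then x else y) + C)) := by
    ext p
    simp only [axisSquare, Set.mem_preimage, Set.mem_pi, Set.mem_univ, forall_true_left,
      Set.mem_setOf_eq, Fin.forall_fin_two]
    rfl
  rw [he, (EuclideanSpace.volume_preserving_symm_measurableEquiv_toLp (Fin 2)).measure_preimage
    (MeasurableSet.univ_pi (fun _ => measurableSet_Icc)).nullMeasurableSet,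
    volume_pi_pi]
  simp [Real.volume_Icc, sq, Fin.prod_univ_two]

lemma volume_closedBall2 (y : EuclideanSpace ℝ (Fin 2)) (K : ℝ) (hK : 0 ≤ K) :
    volume (Metric.closedBall y K) = ENNReal.ofReal (π * K ^ 2) := by
  rw [EuclideanSpace.volume_closedBall]
  simp only [Fintype.card_fin]
  rw [show ((2:ℕ) : ℝ) / 2 + 1 = 2 by norm_num, Real.Gamma_two]
  rw [Real.sq_sqrt Real.pi_pos.le]
  rw [div_one, ← ENNReal.ofReal_pow hK, ← ENNReal.ofReal_mul (by positivity)]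
  ring_nf

lemma volume_axisSquare_ne_zero (x y C : ℝ) (hC : 0 < C) : volume (axisSquare x y C) ≠ 0 := by
  rw [volume_axisSquare]
  exact pow_ne_zero _ (ENNReal.ofReal_pos.2 hC).ne'

lemma volume_axisSquare_ne_top (x y C : ℝ) : volume (axisSquare x y C) ≠ ⊤ := by
  rw [volume_axisSquare]
  exact ENNReal.pow_ne_top ENNReal.ofReal_ne_top

lemma pair_apply (S1 S2 : Set (EuclideanSpace ℝ (Fin 2)))
    (hS1 : MeasurableSet S1) (hS2 : MeasurableSet S2)
    (h10 : volume S1 ≠ 0) (h1t : volume S1 ≠ ⊤)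
    (h20 : volume S2 ≠ 0) (h2t : volume S2 ≠ ⊤)
    (K : ℝ) (hK : 0 < K)
    (hsep : ∀ y ∈ S2, (y ∈ S1 → Metric.closedBall y K ⊆ S1) ∧
      (y ∉ S1 → Disjoint (Metric.closedBall y K) S1)) :
    ((ProbabilityTheory.cond volume S1).prod (ProbabilityTheory.cond volume S2))
      {p | dist p.1 p.2 ≤ K} =
      (volume S1)⁻¹ * (volume S2)⁻¹ * (ENNReal.ofReal (π * K ^ 2) * volume (S1 ∩ S2)) := by
  haveI := cond_isProbabilityMeasure_of_finite h10 h1t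
  haveI := cond_isProbabilityMeasure_of_finite h20 h2t
  rw [Measure.prod_apply_symm (measurableSet_le (by fun_prop) measurable_const)]
  have hsec : ∀ y : EuclideanSpace ℝ (Fin 2),
      ((fun x => (x, y)) ⁻¹' {p : EuclideanSpace ℝ (Fin 2) × EuclideanSpace ℝ (Fin 2) |
        dist p.1 p.2 ≤ K}) = Metric.closedBall y K := by
    intro y; ext x; simp [Metric.mem_closedBall]
  simp_rw [hsec, cond_apply hS1]
  rw [ProbabilityTheory.cond, lintegral_smul_measure]
  have hcong : ∀ y ∈ S2, (volume S1)⁻¹ * volume (S1 ∩ Metric.closedBall y K) =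
      Set.indicator S1 (fun _ => (volume S1)⁻¹ * ENNReal.ofReal (π * K ^ 2)) y := by
    intro y hy
    by_cases hy1 : y ∈ S1
    · rw [Set.indicator_of_mem hy1,
        Set.inter_eq_self_of_subset_right ((hsep y hy).1 hy1), volume_closedBall2 y K hK.le]
    · rw [Set.indicator_of_notMem hy1,
        Set.disjoint_iff_inter_eq_empty.mp ((hsep y hy).2 hy1).symm, measure_empty, mul_zero]
  rw [setLIntegral_congr_fun_ae hS2 (ae_of_all _ hcong), lintegral_indicator_const hS1,
    Measure.restrict_apply hS1]
  ring

lemma prod_sum_apply {α β : Type*} [MeasurableSpace α] [MeasurableSpace β]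
    {m n : ℕ} (c : Fin m → ℝ≥0∞) (d : Fin n → ℝ≥0∞)
    (μ : Fin m → Measure α) (ν : Fin n → Measure β)
    [∀ j, IsFiniteMeasure (μ j)] [∀ k, IsFiniteMeasure (ν k)]
    (hc : ∀ j, c j ≠ ⊤) (hd : ∀ k, d k ≠ ⊤)
    {E : Set (α × β)} (hE : MeasurableSet E) :
    ((∑ j, c j • μ j).prod (∑ k, d k • ν k)) E =
      ∑ j, ∑ k, c j * d k * ((μ j).prod (ν k)) E := by
  haveI h1 : IsFiniteMeasure (∑ j, c j • μ j) := by
    refine ⟨?_⟩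
    rw [Measure.finset_sum_apply]
    refine ENNReal.sum_lt_top.2 fun j _ => ?_
    rw [Measure.smul_apply, smul_eq_mul]
    exact ENNReal.mul_lt_top (hc j).lt_top (measure_lt_top _ _)
  haveI h2 : IsFiniteMeasure (∑ k, d k • ν k) := by
    refine ⟨?_⟩
    rw [Measure.finset_sum_apply]
    refine ENNReal.sum_lt_top.2 fun k _ => ?_
    rw [Measure.smul_apply, smul_eq_mul]
    exact ENNReal.mul_lt_top (hd k).lt_top (measure_lt_top _ _)
  have hmeas : ∀ k : Fin n, Measurable fun x => ν k (Prod.mk x ⁻¹' E) := fun k =>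
    measurable_measure_prodMk_left hE
  rw [Measure.prod_apply hE, lintegral_finset_sum_measure]
  refine Finset.sum_congr rfl fun j _ => ?_
  rw [lintegral_smul_measure]
  simp_rw [Measure.finset_sum_apply, Measure.smul_apply, smul_eq_mul]
  rw [lintegral_finset_sum _ (fun k _ => (hmeas k).const_mul (d k)), Finset.mul_sum]
  refine Finset.sum_congr rfl fun k _ => ?_
  rw [lintegral_const_mul _ (hmeas k), Measure.prod_apply hE]
  ring

/-- The average node degree of node `a`: the expected number of nodes `b ∈ B` within
communication range `K` of node `a`, when all positions are mutually independent and each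
node's position law is a finite mixture of uniform distributions on axis-aligned squares,
equals `Σ_b Σ_j Σ_k P_j(a) P_k(b) π K² vol(S_j(a) ∩ S_k(b)) / (C_j(a)² C_k(b)²)`. -/
theorem stmt1 {Ω : Type*} [MeasurableSpace Ω] (P : Measure Ω) [IsProbabilityMeasure P]
    (B : Type*) [Fintype B] (K : ℝ) (hK : 0 < K)
    -- communities of node a
    (na : ℕ) (Pa : Fin na → ℝ) (xa ya Ca : Fin na → ℝ)
    (hCa : ∀ j, 0 < Ca j) (hPa0 : ∀ j, 0 ≤ Pa j) (hPa1 : ∑ j, Pa j = 1)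
    -- communities of the nodes b ∈ B
    (nb : B → ℕ) (Pb : ∀ b, Fin (nb b) → ℝ) (xb yb Cb : ∀ b, Fin (nb b) → ℝ)
    (hCb : ∀ b k, 0 < Cb b k) (hPb0 : ∀ b k, 0 ≤ Pb b k) (hPb1 : ∀ b, ∑ k, Pb b k = 1)
    -- separation hypothesis for every pair of squares
    (hsep : ∀ (b : B) (j : Fin na) (k : Fin (nb b)),
      ∀ y ∈ axisSquare (xb b k) (yb b k) (Cb b k),
        (y ∈ axisSquare (xa j) (ya j) (Ca j) →
          Metric.closedBall y K ⊆ axisSquare (xa j) (ya j) (Ca j)) ∧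
        (y ∉ axisSquare (xa j) (ya j) (Ca j) →
          Disjoint (Metric.closedBall y K) (axisSquare (xa j) (ya j) (Ca j))))
    -- positions
    (Xa : Ω → EuclideanSpace ℝ (Fin 2)) (Xb : B → Ω → EuclideanSpace ℝ (Fin 2))
    (hXa : Measurable Xa) (hXb : ∀ b, Measurable (Xb b))
    -- mutual independence of all the positions
    (hind : iIndepFun
      (fun o => Option.elim o Xa Xb) P)
    -- laws: finite mixtures of uniform distributions on the squares
    (hlawa : P.map Xa =
      ∑ j, ENNReal.ofReal (Pa j) •
        ProbabilityTheory.cond volume (axisSquare (xa j) (ya j) (Ca j)))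
    (hlawb : ∀ b, P.map (Xb b) =
      ∑ k, ENNReal.ofReal (Pb b k) •
        ProbabilityTheory.cond volume (axisSquare (xb b k) (yb b k) (Cb b k))) :
    ∫ ω, ((Finset.univ.filter fun b : B => dist (Xa ω) (Xb b ω) ≤ K).card : ℝ) ∂P =
      ∑ b : B, ∑ j, ∑ k,
        Pa j * Pb b k * (π * K ^ 2 *
          (volume (axisSquare (xa j) (ya j) (Ca j) ∩
            axisSquare (xb b k) (yb b k) (Cb b k))).toReal) /
          ((Ca j) ^ 2 * (Cb b k) ^ 2) := by
  classical
  have hE : MeasurableSet {p : EuclideanSpace ℝ (Fin 2) × EuclideanSpace ℝ (Fin 2) |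
      dist p.1 p.2 ≤ K} := measurableSet_le (by fun_prop) measurable_const
  have hAmeas : ∀ b : B, MeasurableSet {ω | dist (Xa ω) (Xb b ω) ≤ K} := fun b =>
    measurableSet_le (by fun_prop) measurable_const
  -- per-node probability
  have key : ∀ b : B, P {ω | dist (Xa ω) (Xb b ω) ≤ K} =
      ∑ j, ∑ k, ENNReal.ofReal (Pa j) * ENNReal.ofReal (Pb b k) *
        ((volume (axisSquare (xa j) (ya j) (Ca j)))⁻¹ *
          (volume (axisSquare (xb b k) (yb b k) (Cb b k)))⁻¹ *
          (ENNReal.ofReal (π * K ^ 2) *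
            volume (axisSquare (xa j) (ya j) (Ca j) ∩
              axisSquare (xb b k) (yb b k) (Cb b k)))) := by
    intro b
    have hind' : IndepFun Xa (Xb b) P := hind.indepFun (show (none : Option B) ≠ some b by simp)
    have hmap : P.map (fun ω => (Xa ω, Xb b ω)) = (P.map Xa).prod (P.map (Xb b)) :=
      (indepFun_iff_map_prod_eq_prod_map_map hXa.aemeasurable (hXb b).aemeasurable).mp hind'
    have h0 : P {ω | dist (Xa ω) (Xb b ω) ≤ K} =
        (P.map (fun ω => (Xa ω, Xb b ω))) {p | dist p.1 p.2 ≤ K} := by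
      rw [Measure.map_apply (hXa.prodMk (hXb b)) hE]; rfl
    haveI : ∀ j : Fin na, IsProbabilityMeasure
        (ProbabilityTheory.cond volume (axisSquare (xa j) (ya j) (Ca j))) := fun j =>
      (cond_isProbabilityMeasure_of_finite (volume_axisSquare_ne_zero _ _ _ (hCa j))
        (volume_axisSquare_ne_top _ _ _))
    haveI : ∀ k : Fin (nb b), IsProbabilityMeasure
        (ProbabilityTheory.cond volume (axisSquare (xb b k) (yb b k) (Cb b k))) := fun k =>
      (cond_isProbabilityMeasure_of_finite (volume_axisSquare_ne_zero _ _ _ (hCb b k))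
        (volume_axisSquare_ne_top _ _ _))
    rw [h0, hmap, hlawa, hlawb b,
      prod_sum_apply _ _ _ _ (fun _ => ENNReal.ofReal_ne_top) (fun _ => ENNReal.ofReal_ne_top) hE]
    refine Finset.sum_congr rfl fun j _ => Finset.sum_congr rfl fun k _ => ?_
    rw [pair_apply _ _ (measurableSet_axisSquare _ _ _) (measurableSet_axisSquare _ _ _)
      (volume_axisSquare_ne_zero _ _ _ (hCa j)) (volume_axisSquare_ne_top _ _ _)
      (volume_axisSquare_ne_zero _ _ _ (hCb b k)) (volume_axisSquare_ne_top _ _ _)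
      K hK (hsep b j k)]
  -- LHS as a sum of probabilities
  have hcard : ∀ ω : Ω, ((Finset.univ.filter fun b : B => dist (Xa ω) (Xb b ω) ≤ K).card : ℝ)
      = ∑ b : B, Set.indicator {ω' | dist (Xa ω') (Xb b ω') ≤ K} (fun _ => (1:ℝ)) ω := by
    intro ω
    rw [Finset.card_filter]
    push_cast
    refine Finset.sum_congr rfl fun b _ => ?_
    by_cases h : dist (Xa ω) (Xb b ω) ≤ K <;> simp [h, Set.indicator_apply]
  have hL : ∫ ω, ((Finset.univ.filter fun b : B => dist (Xa ω) (Xb b ω) ≤ K).card : ℝ) ∂P =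
      ∑ b : B, (P {ω | dist (Xa ω) (Xb b ω) ≤ K}).toReal := by
    simp_rw [hcard]
    rw [integral_finset_sum _ (fun b _ => (integrable_const (1:ℝ)).indicator (hAmeas b))]
    refine Finset.sum_congr rfl fun b _ => ?_
    rw [integral_indicator_const _ (hAmeas b), smul_eq_mul, mul_one, measureReal_def]
  rw [hL]
  refine Finset.sum_congr rfl fun b _ => ?_
  rw [key b]
  have hfin : ∀ (j : Fin na) (k : Fin (nb b)),
      ENNReal.ofReal (Pa j) * ENNReal.ofReal (Pb b k) *
        ((volume (axisSquare (xa j) (ya j) (Ca j)))⁻¹ *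
          (volume (axisSquare (xb b k) (yb b k) (Cb b k)))⁻¹ *
          (ENNReal.ofReal (π * K ^ 2) *
            volume (axisSquare (xa j) (ya j) (Ca j) ∩
              axisSquare (xb b k) (yb b k) (Cb b k)))) ≠ ⊤ := by
    intro j k
    refine ENNReal.mul_ne_top (ENNReal.mul_ne_top ENNReal.ofReal_ne_top ENNReal.ofReal_ne_top) ?_
    refine ENNReal.mul_ne_top (ENNReal.mul_ne_top ?_ ?_) ?_
    · exact ENNReal.inv_ne_top.2 (volume_axisSquare_ne_zero _ _ _ (hCa j))
    · exact ENNReal.inv_ne_top.2 (volume_axisSquare_ne_zero _ _ _ (hCb b k))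
    · refine ENNReal.mul_ne_top ENNReal.ofReal_ne_top ?_
      exact ((measure_mono Set.inter_subset_left).trans_lt
        (volume_axisSquare_ne_top (xa j) (ya j) (Ca j)).lt_top).ne
  rw [ENNReal.toReal_sum (fun j _ => ENNReal.sum_ne_top.2 fun k _ => hfin j k)]
  refine Finset.sum_congr rfl fun j _ => ?_
  rw [ENNReal.toReal_sum (fun k _ => hfin j k)]
  refine Finset.sum_congr rfl fun k _ => ?_
  rw [volume_axisSquare (xa j) (ya j) (Ca j), volume_axisSquare (xb b k) (yb b k) (Cb b k)]
  simp only [ENNReal.toReal_mul, ENNReal.toReal_inv, ENNReal.toReal_pow,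
    ENNReal.toReal_ofReal (hPa0 j), ENNReal.toReal_ofReal (hPb0 b k),
    ENNReal.toReal_ofReal (show (0:ℝ) ≤ π * K ^ 2 by positivity),
    ENNReal.toReal_ofReal (hCa j).le, ENNReal.toReal_ofReal (hCb b k).le]
  have h1 : (Ca j) ^ 2 ≠ 0 := pow_ne_zero 2 (hCa j).ne'
  have h2 : (Cb b k) ^ 2 ≠ 0 := pow_ne_zero 2 (hCb b k).ne'
  field_simp
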